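/- Let q = 1, n ≥ 2 a natural number, I > 0, θ₀ ∈ ℝ, and α ∈ (0,1) with Q := Q_{χ²₁}(1-α) satisfying Q < n·ln(n)/(n-1). Then the interval [√(Q/n)·I^(-1/2), √(ln n/(n-1))·I^(-1/2)) is nonempty, i.e., √(Q/n)·I^(-1/2) < √(ln n/(n-1))·I^(-1/2). Moreover, for any θ̂ with |θ̂ - θ₀| in this interval, the Wald statistic W = n·I·(θ̂-θ₀)² satisfies W ≥ Q (significance at level α) and W < n·ln(n)/(n-1), which is equivalent to √n·exp(-(1/2)·((n-1)/n)·W) > 1 (eJAB favors the null). -/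
import Mathlib


set_option maxHeartbeats 1000000 in
/-- The candidate type I error effect-size window for q = 1. -/
theorem stmt_12 (n : ℕ) (hn : 2 ≤ n) (I : ℝ) (hI : 0 < I) (θ₀ : ℝ)
    (α : ℝ) (hα0 : 0 < α) (hα1 : α < 1) (Q : ℝ) (hQ : 0 < Q)
    (hQlt : Q < n * Real.log n / (n - 1)) :
    Real.sqrt (Q / n) * (Real.sqrt I)⁻¹ <
      Real.sqrt (Real.log n / (n - 1)) * (Real.sqrt I)⁻¹ ∧
    ∀ θhat : ℝ,
      Real.sqrt (Q / n) * (Real.sqrt I)⁻¹ ≤ |θhat - θ₀| →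
      |θhat - θ₀| < Real.sqrt (Real.log n / (n - 1)) * (Real.sqrt I)⁻¹ →
      Q ≤ n * I * (θhat - θ₀) ^ 2 ∧
      n * I * (θhat - θ₀) ^ 2 < n * Real.log n / (n - 1) ∧
      (n * I * (θhat - θ₀) ^ 2 < n * Real.log n / (n - 1) ↔
        1 < Real.sqrt n *
          Real.exp (-(1 / 2) * (((n : ℝ) - 1) / n) * (n * I * (θhat - θ₀) ^ 2))) := by
  have hN2 : (2:ℝ) ≤ (n:ℝ) := by exact_mod_cast hn
  have hN0 : (0:ℝ) < (n:ℝ) := by linarith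
  have hN1 : (1:ℝ) < (n:ℝ) := by linarith
  have hNm1 : (0:ℝ) < (n:ℝ) - 1 := by linarith
  have hlog : 0 < Real.log n := Real.log_pos hN1
  have hs : 0 < Real.sqrt I := Real.sqrt_pos.mpr hI
  have hsi : 0 < (Real.sqrt I)⁻¹ := inv_pos.mpr hs
  have hQlt' : Q * ((n:ℝ) - 1) < (n:ℝ) * Real.log n := by
    rwa [lt_div_iff₀ hNm1] at hQlt
  have hdiv : Q / (n:ℝ) < Real.log n / ((n:ℝ) - 1) := by
    rw [div_lt_div_iff₀ hN0 hNm1]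
    nlinarith
  have hsq : Real.sqrt I ^ 2 = I := Real.sq_sqrt hI.le
  refine ⟨mul_lt_mul_of_pos_right (Real.sqrt_lt_sqrt (by positivity) hdiv) hsi, ?_⟩
  intro θhat hlo hhi
  set d := |θhat - θ₀| with hd
  have hd0 : 0 ≤ d := abs_nonneg _
  have hdsq : d ^ 2 = (θhat - θ₀) ^ 2 := sq_abs _
  -- lower bound
  have h1 : Real.sqrt (Q / n) ≤ d * Real.sqrt I := by
    have := mul_le_mul_of_nonneg_right hlo hs.le
    rwa [mul_assoc, inv_mul_cancel₀ hs.ne', mul_one] at this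
  have h1' : Q / (n:ℝ) ≤ (d * Real.sqrt I) ^ 2 := by
    rw [← Real.sq_sqrt (show (0:ℝ) ≤ Q / n by positivity)]
    exact pow_le_pow_left₀ (Real.sqrt_nonneg _) h1 2
  have hW1 : Q ≤ (n:ℝ) * I * (θhat - θ₀) ^ 2 := by
    have : Q / (n:ℝ) ≤ d ^ 2 * I := by
      calc Q / (n:ℝ) ≤ (d * Real.sqrt I) ^ 2 := h1'
        _ = d ^ 2 * Real.sqrt I ^ 2 := by ring
        _ = d ^ 2 * I := by rw [hsq]
    rw [← hdsq]
    rw [div_le_iff₀ hN0] at this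
    nlinarith
  -- upper bound
  have h2 : d * Real.sqrt I < Real.sqrt (Real.log n / ((n:ℝ) - 1)) := by
    have := mul_lt_mul_of_pos_right hhi hs
    rwa [mul_assoc, inv_mul_cancel₀ hs.ne', mul_one] at this
  have h2' : (d * Real.sqrt I) ^ 2 < Real.log n / ((n:ℝ) - 1) := by
    rw [← Real.sq_sqrt (show (0:ℝ) ≤ Real.log n / ((n:ℝ) - 1) by positivity)]
    exact pow_lt_pow_left₀ h2 (by positivity) (by norm_num)
  have hW2 : (n:ℝ) * I * (θhat - θ₀) ^ 2 < (n:ℝ) * Real.log n / ((n:ℝ) - 1) := by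
    have hd2 : d ^ 2 * I < Real.log n / ((n:ℝ) - 1) := by
      have e : (d * Real.sqrt I) ^ 2 = d ^ 2 * I := by rw [mul_pow, hsq]
      linarith [h2', e ▸ h2']
    rw [← hdsq]
    rw [lt_div_iff₀ hNm1] at hd2 ⊢
    nlinarith
  refine ⟨hW1, hW2, ?_⟩
  -- the iff
  set W := (n:ℝ) * I * (θhat - θ₀) ^ 2 with hWdef
  have hsn : Real.sqrt n = Real.exp (Real.log n / 2) := by
    rw [← Real.log_sqrt hN0.le, Real.exp_log (Real.sqrt_pos.mpr hN0)]
  rw [hsn, ← Real.exp_add, Real.one_lt_exp_iff]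
  have e1 : Real.log n / 2 + (-(1/2) * (((n:ℝ) - 1) / n) * W)
      = ((n:ℝ) * Real.log n - ((n:ℝ) - 1) * W) / (2 * n) := by
    field_simp
    ring
  rw [e1, lt_div_iff₀ (by positivity : (0:ℝ) < 2 * (n:ℝ)), zero_mul, sub_pos,
    lt_div_iff₀ hNm1]
  constructor <;> intro h <;> nlinarith
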